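/- If R is a commutative ring such that its classical quotient ring Q_cl(R) is McCoy, then R is McCoy. -/

import Mathlib

def IsDense {R : Type*} [CommRing R] (I : Ideal R) : Prop :=
  ∀ x : R, (∀ y ∈ I, x * y = 0) → x = 0
def IsMcCoy (R : Type*) [CommRing R] : Prop :=
  ∀ I : Ideal R, I.FG → IsDense I → ∃ a ∈ I, a ∈ nonZeroDivisors R

theorem stmt1 (R : Type*) [CommRing R]
    (h : IsMcCoy (Localization (nonZeroDivisors R))) : IsMcCoy R := by
  set Q := Localization (nonZeroDivisors R)
  set φ := algebraMap R Q with hφ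
  have hinj : Function.Injective φ := IsFractionRing.injective R Q
  intro I hFG hDense
  set J := Ideal.map φ I with hJ
  have hJFG : J.FG := Ideal.FG.map hFG φ
  have hJDense : IsDense J := by
    intro q hq
    obtain ⟨⟨r, s⟩, rfl⟩ := IsLocalization.mk'_surjective (nonZeroDivisors R) q
    have hr : r = 0 := by
      apply hDense
      intro y hy
      have h1 : IsLocalization.mk' Q r s * φ y = 0 :=
        hq (φ y) (Ideal.mem_map_of_mem φ hy)
      have h2 : φ (r * y) = 0 := by
        rw [map_mul, ← IsLocalization.mk'_spec Q r s, mul_right_comm, h1, zero_mul]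
      have := hinj (by rw [h2, map_zero] : φ (r * y) = φ 0)
      exact this
    show IsLocalization.mk' Q r s = 0; rw [hr, IsLocalization.mk'_zero]
  obtain ⟨a, haJ, haReg⟩ := h J hJFG hJDense
  obtain ⟨⟨x, s⟩, hx⟩ := (IsLocalization.mem_map_algebraMap_iff (nonZeroDivisors R) Q).1 haJ
  refine ⟨x, x.2, ?_⟩
  rw [mem_nonZeroDivisors_iff_right]
  intro c hc
  have hφs : φ (s : R) ∈ nonZeroDivisors Q := by
    have : IsUnit (φ (s : R)) := IsLocalization.map_units Q s
    exact this.mem_nonZeroDivisors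
  have hφx : φ (x : R) ∈ nonZeroDivisors Q := by
    rw [← hx]; exact mul_mem haReg hφs
  have : φ c * φ (x : R) = 0 := by rw [← map_mul, hc, map_zero]
  have := (mem_nonZeroDivisors_iff_right.1 hφx) (φ c) this
  exact hinj (by rw [this, map_zero])
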